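/- arXiv:0711.0171 — 2 statements merged into one kernel-verified Lean document; each statement's English description precedes it below -/
import Mathlib

section
/- For every ε > 0 there is a constant C(ε) such that the following holds. Let N ≥ 2 and let D, H, L be real numbers with 1 ≤ D, H, L ≤ N, and let L₁ ≤ 2L. Then Σ_{d₁, d₂ ≤ D} (1/[d₁, d₂]) · #{ (k₁, k₂, l₁, l₂) ∈ ℕ⁴ : 0 < k₁, k₂ ≤ H, L < l₁, l₂ ≤ L₁, k₁l₁ = k₂l₂ } ≤ C(ε) · N^{ε} · H L. -/
open Finset
namespace Stmt8


lemma log_step (n : ℕ) (hn : 1 ≤ n) :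
    (1 : ℝ) / ((n : ℝ) + 1) + Real.log n ≤ Real.log ((n : ℝ) + 1) := by
  have hn0 : (0:ℝ) < n := by exact_mod_cast hn
  have h := Real.log_le_sub_one_of_pos (x := (n : ℝ)/((n:ℝ)+1)) (by positivity)
  rw [Real.log_div (by positivity) (by positivity)] at h
  have : (n:ℝ)/((n:ℝ)+1) - 1 = -(1/((n:ℝ)+1)) := by field_simp; ring
  rw [this] at h
  linarith

lemma harm_le : ∀ m : ℕ, ∑ d ∈ Icc 1 m, (1 / (d:ℝ)) ≤ 1 + Real.log m := by
  intro m
  induction m with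
  | zero => simp
  | succ n ih =>
    rcases Nat.eq_zero_or_pos n with h0 | h1
    · subst h0; simp
    · rw [Finset.sum_Icc_succ_top (by omega)]
      have h := log_step n h1
      push_cast
      push_cast at ih
      linarith

lemma harm_le' (k m : ℕ) (hk : k ≤ m) (hm : 1 ≤ m) :
    ∑ d ∈ Icc 1 k, (1 / (d:ℝ)) ≤ 1 + Real.log m := by
  refine (harm_le k).trans ?_
  rcases Nat.eq_zero_or_pos k with h0 | h1
  · subst h0; simp
    have : (0:ℝ) ≤ Real.log m := Real.log_nonneg (by exact_mod_cast hm)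
    linarith [this]
  · have : Real.log (k:ℝ) ≤ Real.log (m:ℝ) :=
      Real.log_le_log (by exact_mod_cast h1) (by exact_mod_cast hk)
    linarith




lemma filter_dvd_image (g m : ℕ) (hg : 1 ≤ g) :
    (Icc 1 m).filter (fun d => g ∣ d) = (Icc 1 (m / g)).image (fun e => g * e) := by
  ext d
  simp only [mem_filter, mem_Icc, mem_image]
  constructor
  · rintro ⟨⟨h1, h2⟩, e, rfl⟩
    refine ⟨e, ⟨?_, ?_⟩, rfl⟩
    · by_contra h; push_neg at h; interval_cases e <;> omega
    · exact Nat.le_div_iff_mul_le (by omega) |>.mpr (by nlinarith)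
  · rintro ⟨e, ⟨he1, he2⟩, rfl⟩
    have := (Nat.le_div_iff_mul_le (show 0 < g by omega)).mp he2
    exact ⟨⟨by nlinarith, by nlinarith⟩, e, rfl⟩

lemma sum_inv_multiples (g m : ℕ) (hg : 1 ≤ g) :
    ∑ d ∈ Icc 1 m, (if g ∣ d then (1 / (d:ℝ)) else 0)
      = (1 / (g:ℝ)) * ∑ e ∈ Icc 1 (m / g), (1 / (e:ℝ)) := by
  rw [← Finset.sum_filter, filter_dvd_image g m hg,
    Finset.sum_image (by intro a _ b _ h; exact Nat.eq_of_mul_eq_mul_left (by omega) h),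
    Finset.mul_sum]
  refine Finset.sum_congr rfl fun e he => ?_
  push_cast
  rw [one_div, one_div, one_div, mul_inv]

lemma sum_inv_lcm (m : ℕ) (hm : 1 ≤ m) :
    ∑ d₁ ∈ Icc 1 m, ∑ d₂ ∈ Icc 1 m, (1 / (Nat.lcm d₁ d₂ : ℝ))
      ≤ (1 + Real.log m)^3 := by
  have hlog : (0:ℝ) ≤ 1 + Real.log m := by
    have : (0:ℝ) ≤ Real.log m := Real.log_nonneg (by exact_mod_cast hm)
    linarith
  have step1 : ∀ d₁ ∈ Icc 1 m, ∀ d₂ ∈ Icc 1 m,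
      (1 / (Nat.lcm d₁ d₂ : ℝ)) ≤ ∑ g ∈ Icc 1 m,
        (g:ℝ) * (if g ∣ d₁ then (1 / (d₁:ℝ)) else 0) * (if g ∣ d₂ then (1 / (d₂:ℝ)) else 0) := by
    intro d₁ hd₁ d₂ hd₂
    simp only [mem_Icc] at hd₁ hd₂
    have hgcd : Nat.gcd d₁ d₂ ∈ Icc 1 m := by
      simp only [mem_Icc]
      constructor
      · exact Nat.one_le_iff_ne_zero.mpr (Nat.gcd_ne_zero_left (by omega))
      · exact le_trans (Nat.gcd_le_left _ (by omega)) hd₁.2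
    have hval : (Nat.gcd d₁ d₂ : ℝ) * (if Nat.gcd d₁ d₂ ∣ d₁ then (1 / (d₁:ℝ)) else 0)
        * (if Nat.gcd d₁ d₂ ∣ d₂ then (1 / (d₂:ℝ)) else 0) = 1 / (Nat.lcm d₁ d₂ : ℝ) := by
      rw [if_pos (Nat.gcd_dvd_left _ _), if_pos (Nat.gcd_dvd_right _ _)]
      have h1 : (Nat.gcd d₁ d₂ : ℝ) * (Nat.lcm d₁ d₂ : ℝ) = (d₁ : ℝ) * (d₂ : ℝ) := by
        rw [← Nat.cast_mul, ← Nat.cast_mul, Nat.gcd_mul_lcm]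
      have hd1 : (0:ℝ) < d₁ := by exact_mod_cast (by omega : 0 < d₁)
      have hd2 : (0:ℝ) < d₂ := by exact_mod_cast (by omega : 0 < d₂)
      have hl : (0:ℝ) < Nat.lcm d₁ d₂ := by
        have := Nat.pos_of_ne_zero
          (Nat.lcm_ne_zero (show d₁ ≠ 0 by omega) (show d₂ ≠ 0 by omega))
        exact_mod_cast this
      field_simp
      nlinarith
    rw [← hval]
    exact Finset.single_le_sum
      (f := fun g : ℕ => (g:ℝ) * (if g ∣ d₁ then (1 / (d₁:ℝ)) else 0)
        * (if g ∣ d₂ then (1 / (d₂:ℝ)) else 0))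
      (fun g _ => by
        refine mul_nonneg (mul_nonneg (by positivity) ?_) ?_ <;>
          · split_ifs <;> positivity) hgcd
  calc ∑ d₁ ∈ Icc 1 m, ∑ d₂ ∈ Icc 1 m, (1 / (Nat.lcm d₁ d₂ : ℝ))
      ≤ ∑ d₁ ∈ Icc 1 m, ∑ d₂ ∈ Icc 1 m, ∑ g ∈ Icc 1 m,
        (g:ℝ) * (if g ∣ d₁ then (1 / (d₁:ℝ)) else 0) * (if g ∣ d₂ then (1 / (d₂:ℝ)) else 0) := by
        refine Finset.sum_le_sum fun d₁ hd₁ => Finset.sum_le_sum fun d₂ hd₂ => step1 d₁ hd₁ d₂ hd₂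
    _ = ∑ g ∈ Icc 1 m, (g:ℝ) * (∑ d ∈ Icc 1 m, (if g ∣ d then (1 / (d:ℝ)) else 0))^2 := by
        calc ∑ d₁ ∈ Icc 1 m, ∑ d₂ ∈ Icc 1 m, ∑ g ∈ Icc 1 m,
            (g:ℝ) * (if g ∣ d₁ then (1 / (d₁:ℝ)) else 0) * (if g ∣ d₂ then (1 / (d₂:ℝ)) else 0)
            = ∑ d₁ ∈ Icc 1 m, ∑ g ∈ Icc 1 m, ∑ d₂ ∈ Icc 1 m,
            (g:ℝ) * (if g ∣ d₁ then (1 / (d₁:ℝ)) else 0) * (if g ∣ d₂ then (1 / (d₂:ℝ)) else 0) :=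
              Finset.sum_congr rfl fun d₁ _ => Finset.sum_comm
          _ = ∑ g ∈ Icc 1 m, ∑ d₁ ∈ Icc 1 m, ∑ d₂ ∈ Icc 1 m,
            (g:ℝ) * (if g ∣ d₁ then (1 / (d₁:ℝ)) else 0) * (if g ∣ d₂ then (1 / (d₂:ℝ)) else 0) :=
              Finset.sum_comm
          _ = ∑ g ∈ Icc 1 m, (g:ℝ) * (∑ d ∈ Icc 1 m, (if g ∣ d then (1 / (d:ℝ)) else 0))^2 := ?_
        refine Finset.sum_congr rfl fun g _ => ?_
        rw [sq, Finset.sum_mul_sum, Finset.mul_sum]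
        refine Finset.sum_congr rfl fun d₁ _ => ?_
        rw [Finset.mul_sum]
        refine Finset.sum_congr rfl fun d₂ _ => ?_
        ring
    _ ≤ ∑ g ∈ Icc 1 m, (1 / (g:ℝ)) * (1 + Real.log m)^2 := by
        refine Finset.sum_le_sum fun g hg => ?_
        simp only [mem_Icc] at hg
        have hg1 : 1 ≤ g := hg.1
        rw [sum_inv_multiples g m hg1]
        have hgR : (0:ℝ) < g := by exact_mod_cast hg1
        have hH : ∑ e ∈ Icc 1 (m / g), (1 / (e:ℝ)) ≤ 1 + Real.log m :=
          harm_le' _ m (Nat.div_le_self _ _) hm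
        have hHpos : (0:ℝ) ≤ ∑ e ∈ Icc 1 (m / g), (1 / (e:ℝ)) :=
          Finset.sum_nonneg fun e _ => by positivity
        calc (g:ℝ) * ((1 / (g:ℝ)) * ∑ e ∈ Icc 1 (m / g), (1 / (e:ℝ)))^2
            = (1 / (g:ℝ)) * (∑ e ∈ Icc 1 (m / g), (1 / (e:ℝ)))^2 := by
              field_simp
          _ ≤ (1 / (g:ℝ)) * (1 + Real.log m)^2 := by
              have hlog : (0:ℝ) ≤ 1 + Real.log m := by
                have : (0:ℝ) ≤ Real.log m := Real.log_nonneg (by exact_mod_cast hm)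
                linarith
              gcongr
    _ = (∑ g ∈ Icc 1 m, (1 / (g:ℝ))) * (1 + Real.log m)^2 := by
        rw [Finset.sum_mul]
    _ ≤ (1 + Real.log m) * (1 + Real.log m)^2 := by
        have := harm_le' m m le_rfl hm
        gcongr
    _ = (1 + Real.log m)^3 := by ring




lemma card_mult_Icc (g h : ℕ) :
    ((Icc 1 h).filter (fun d => g ∣ d)).card = h / g := by
  have : Icc 1 h = Ioc 0 h := rfl
  rw [this, Nat.Ioc_filter_dvd_card_eq_div]

lemma card_mult_Ioc (g a b : ℕ) (hab : a ≤ b) :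
    ((Ioc a b).filter (fun d => g ∣ d)).card = b / g - a / g := by
  have hunion : Ioc 0 a ∪ Ioc a b = Ioc 0 b := Finset.Ioc_union_Ioc_eq_Ioc (Nat.zero_le a) hab
  have hdisj : Disjoint (Ioc 0 a) (Ioc a b) := by
    rw [Finset.disjoint_left]
    intro x hx hx'
    simp only [mem_Ioc] at hx hx'
    omega
  have h1 : ((Ioc 0 a).filter (fun d => g ∣ d)).card + ((Ioc a b).filter (fun d => g ∣ d)).card
      = ((Ioc 0 b).filter (fun d => g ∣ d)).card := by
    rw [← Finset.card_union_of_disjoint (Finset.disjoint_filter_filter hdisj),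
      ← Finset.filter_union, hunion]
  rw [Nat.Ioc_filter_dvd_card_eq_div] at h1
  rw [Nat.Ioc_filter_dvd_card_eq_div] at h1
  omega

lemma nat_div_real_lb (a g : ℕ) (hg : 1 ≤ g) : (a:ℝ)/(g:ℝ) - 1 ≤ ((a / g : ℕ) : ℝ) := by
  have h1 : a < g * (a / g) + g := by
    have := Nat.div_add_mod a g
    have := Nat.mod_lt a (show 0 < g by omega)
    omega
  have hgR : (0:ℝ) < g := by exact_mod_cast hg
  have h2 : (a:ℝ) < g * ((a/g : ℕ):ℝ) + g := by exact_mod_cast h1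
  rw [div_sub_one (by positivity), div_le_iff₀ hgR]
  nlinarith

lemma nat_div_real_ub (a g : ℕ) (hg : 1 ≤ g) : ((a / g : ℕ) : ℝ) ≤ (a:ℝ)/(g:ℝ) := by
  have hgR : (0:ℝ) < g := by exact_mod_cast hg
  rw [le_div_iff₀ hgR]
  exact_mod_cast Nat.div_mul_le_self a g

/-- Sum of gcd over pairs in `Ioc a b`. -/
lemma gcd_sum (a b : ℕ) (hab : a ≤ b) (hb : 1 ≤ b) :
    ∑ l₁ ∈ Ioc a b, ∑ l₂ ∈ Ioc a b, (Nat.gcd l₁ l₂ : ℝ)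
      ≤ (1 + Real.log b) * ((b:ℝ) - (a:ℝ))^2 + 2*((b:ℝ)-(a:ℝ))*(b:ℝ) + (b:ℝ)^2 := by
  have step1 : ∀ l₁ ∈ Ioc a b, ∀ l₂ ∈ Ioc a b,
      (Nat.gcd l₁ l₂ : ℝ) ≤ ∑ g ∈ Icc 1 b,
        (g:ℝ) * (if g ∣ l₁ then (1:ℝ) else 0) * (if g ∣ l₂ then (1:ℝ) else 0) := by
    intro l₁ hl₁ l₂ hl₂
    simp only [mem_Ioc] at hl₁ hl₂
    have hgcd : Nat.gcd l₁ l₂ ∈ Icc 1 b := by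
      simp only [mem_Icc]
      exact ⟨Nat.one_le_iff_ne_zero.mpr (Nat.gcd_ne_zero_left (by omega)),
        le_trans (Nat.gcd_le_left _ (by omega)) hl₁.2⟩
    have hval : ((Nat.gcd l₁ l₂ : ℕ):ℝ) * (if Nat.gcd l₁ l₂ ∣ l₁ then (1:ℝ) else 0)
        * (if Nat.gcd l₁ l₂ ∣ l₂ then (1:ℝ) else 0) = (Nat.gcd l₁ l₂ : ℝ) := by
      rw [if_pos (Nat.gcd_dvd_left _ _), if_pos (Nat.gcd_dvd_right _ _)]; ring
    rw [← hval]
    exact Finset.single_le_sum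
      (f := fun g : ℕ => (g:ℝ) * (if g ∣ l₁ then (1:ℝ) else 0) * (if g ∣ l₂ then (1:ℝ) else 0))
      (fun g _ => by
        refine mul_nonneg (mul_nonneg (by positivity) ?_) ?_ <;>
          · split_ifs <;> positivity) hgcd
  calc ∑ l₁ ∈ Ioc a b, ∑ l₂ ∈ Ioc a b, (Nat.gcd l₁ l₂ : ℝ)
      ≤ ∑ l₁ ∈ Ioc a b, ∑ l₂ ∈ Ioc a b, ∑ g ∈ Icc 1 b,
        (g:ℝ) * (if g ∣ l₁ then (1:ℝ) else 0) * (if g ∣ l₂ then (1:ℝ) else 0) :=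
        Finset.sum_le_sum fun l₁ hl₁ => Finset.sum_le_sum fun l₂ hl₂ => step1 l₁ hl₁ l₂ hl₂
    _ = ∑ g ∈ Icc 1 b, (g:ℝ) * (∑ l ∈ Ioc a b, (if g ∣ l then (1:ℝ) else 0))^2 := by
        calc ∑ l₁ ∈ Ioc a b, ∑ l₂ ∈ Ioc a b, ∑ g ∈ Icc 1 b,
            (g:ℝ) * (if g ∣ l₁ then (1:ℝ) else 0) * (if g ∣ l₂ then (1:ℝ) else 0)
            = ∑ l₁ ∈ Ioc a b, ∑ g ∈ Icc 1 b, ∑ l₂ ∈ Ioc a b,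
            (g:ℝ) * (if g ∣ l₁ then (1:ℝ) else 0) * (if g ∣ l₂ then (1:ℝ) else 0) :=
              Finset.sum_congr rfl fun l₁ _ => Finset.sum_comm
          _ = ∑ g ∈ Icc 1 b, ∑ l₁ ∈ Ioc a b, ∑ l₂ ∈ Ioc a b,
            (g:ℝ) * (if g ∣ l₁ then (1:ℝ) else 0) * (if g ∣ l₂ then (1:ℝ) else 0) :=
              Finset.sum_comm
          _ = ∑ g ∈ Icc 1 b, (g:ℝ) * (∑ l ∈ Ioc a b, (if g ∣ l then (1:ℝ) else 0))^2 := ?_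
        refine Finset.sum_congr rfl fun g _ => ?_
        rw [sq, Finset.sum_mul_sum, Finset.mul_sum]
        refine Finset.sum_congr rfl fun l₁ _ => ?_
        rw [Finset.mul_sum]
        refine Finset.sum_congr rfl fun l₂ _ => ?_
        ring
    _ ≤ ∑ g ∈ Icc 1 b, (g:ℝ) * (((b:ℝ)-(a:ℝ))/(g:ℝ) + 1)^2 := by
        refine Finset.sum_le_sum fun g hg => ?_
        simp only [mem_Icc] at hg
        have hg1 : 1 ≤ g := hg.1
        have hgR : (0:ℝ) < g := by exact_mod_cast hg1
        have hsum : ∑ l ∈ Ioc a b, (if g ∣ l then (1:ℝ) else 0)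
            = ((b / g - a / g : ℕ) : ℝ) := by
          rw [← Finset.sum_filter, ← card_mult_Ioc g a b hab]
          simp
        rw [hsum]
        have hT : ((b / g - a / g : ℕ) : ℝ) ≤ ((b:ℝ)-(a:ℝ))/(g:ℝ) + 1 := by
          have hle : a / g ≤ b / g := Nat.div_le_div_right hab
          rw [Nat.cast_sub hle]
          have h1 := nat_div_real_ub b g hg1
          have h2 := nat_div_real_lb a g hg1
          have : ((b:ℝ)-(a:ℝ))/(g:ℝ) = (b:ℝ)/g - (a:ℝ)/g := by ring
          rw [this]
          linarith
        have hTnn : (0:ℝ) ≤ ((b / g - a / g : ℕ) : ℝ) := Nat.cast_nonneg _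
        gcongr
    _ ≤ (1 + Real.log b) * ((b:ℝ) - (a:ℝ))^2 + 2*((b:ℝ)-(a:ℝ))*(b:ℝ) + (b:ℝ)^2 := by
        have hba : (0:ℝ) ≤ (b:ℝ) - (a:ℝ) := by
          have : (a:ℝ) ≤ b := by exact_mod_cast hab
          linarith
        have hexp : ∀ g ∈ Icc 1 b, (g:ℝ) * (((b:ℝ)-(a:ℝ))/(g:ℝ) + 1)^2
            = ((b:ℝ)-(a:ℝ))^2 * (1/(g:ℝ)) + 2*((b:ℝ)-(a:ℝ)) + (g:ℝ) := by
          intro g hg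
          simp only [mem_Icc] at hg
          have hgR : (0:ℝ) < g := by exact_mod_cast hg.1
          field_simp
          ring
        rw [Finset.sum_congr rfl hexp]
        rw [Finset.sum_add_distrib, Finset.sum_add_distrib, ← Finset.mul_sum]
        have h1 : ∑ g ∈ Icc 1 b, (1/(g:ℝ)) ≤ 1 + Real.log b := harm_le' b b le_rfl hb
        have h2 : ∑ _g ∈ Icc 1 b, (2*((b:ℝ)-(a:ℝ))) ≤ 2*((b:ℝ)-(a:ℝ))*(b:ℝ) := by
          rw [Finset.sum_const, Nat.card_Icc]
          simp only [nsmul_eq_mul]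
          have : ((b + 1 - 1 : ℕ):ℝ) = (b:ℝ) := by push_cast; ring
          rw [this]; nlinarith
        have h3 : ∑ g ∈ Icc 1 b, (g:ℝ) ≤ (b:ℝ)^2 := by
          calc ∑ g ∈ Icc 1 b, (g:ℝ) ≤ ∑ _g ∈ Icc 1 b, (b:ℝ) := by
                refine Finset.sum_le_sum fun g hg => ?_
                simp only [mem_Icc] at hg
                exact_mod_cast hg.2
            _ = (b:ℝ) * (b:ℝ) := by
                rw [Finset.sum_const, Nat.card_Icc]
                simp only [nsmul_eq_mul]
                push_cast [Nat.add_sub_cancel]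
                ring
            _ = (b:ℝ)^2 := by ring
        have hbound : ((b:ℝ)-(a:ℝ))^2 * (∑ g ∈ Icc 1 b, (1/(g:ℝ)))
            ≤ ((b:ℝ)-(a:ℝ))^2 * (1 + Real.log b) := by
          have : (0:ℝ) ≤ ((b:ℝ)-(a:ℝ))^2 := sq_nonneg _
          nlinarith
        nlinarith [hbound, h2, h3]




lemma count_le (h a b : ℕ) :
    ((((Icc 1 h ×ˢ Icc 1 h) ×ˢ (Ioc a b ×ˢ Ioc a b)).filter
        (fun x : (ℕ × ℕ) × ℕ × ℕ => x.1.1 * x.2.1 = x.1.2 * x.2.2)).card : ℕ)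
      ≤ ∑ l₁ ∈ Ioc a b, ∑ l₂ ∈ Ioc a b, h / (l₂ / Nat.gcd l₁ l₂) := by
  rw [Finset.card_filter, Finset.sum_product, Finset.sum_comm]
  rw [Finset.sum_product]
  refine Finset.sum_le_sum fun l₁ hl₁ => Finset.sum_le_sum fun l₂ hl₂ => ?_
  simp only [mem_Ioc] at hl₁ hl₂
  have hl₂0 : 0 < l₂ := by omega
  have hl₁0 : 0 < l₁ := by omega
  set g := Nat.gcd l₁ l₂ with hg
  have hg0 : 0 < g := Nat.gcd_pos_of_pos_left _ hl₁0
  set m := l₂ / g with hm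
  have hml : m * g = l₂ := Nat.div_mul_cancel (Nat.gcd_dvd_right l₁ l₂)
  have hm0 : 0 < m := by
    rcases Nat.eq_zero_or_pos m with h0 | h0
    · rw [h0] at hml; omega
    · exact h0
  have key : (∑ k ∈ Icc 1 h ×ˢ Icc 1 h, if k.1 * l₁ = k.2 * l₂ then 1 else 0)
      = ((Icc 1 h ×ˢ Icc 1 h).filter (fun k : ℕ × ℕ => k.1 * l₁ = k.2 * l₂)).card := by
    rw [Finset.card_filter]
  rw [key]
  have hsub : ((Icc 1 h ×ˢ Icc 1 h).filter (fun k : ℕ × ℕ => k.1 * l₁ = k.2 * l₂)).card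
      ≤ ((Icc 1 h).filter (fun k₁ => m ∣ k₁)).card := by
    refine Finset.card_le_card_of_injOn (fun k => k.1) ?_ ?_
    · intro k hk
      simp only [coe_filter, Set.mem_setOf_eq, mem_filter, mem_product, mem_Icc] at hk ⊢
      refine ⟨hk.1.1, ?_⟩
      -- m ∣ k.1
      have hdvd : l₂ ∣ k.1 * l₁ := ⟨k.2, by rw [hk.2]; ring⟩
      obtain ⟨c, hc⟩ := hdvd
      set n := l₁ / g with hn
      have hnl : n * g = l₁ := Nat.div_mul_cancel (Nat.gcd_dvd_left l₁ l₂)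
      have heq : g * (k.1 * n) = g * (m * c) := by
        calc g * (k.1 * n) = k.1 * (n * g) := by ring
          _ = k.1 * l₁ := by rw [hnl]
          _ = l₂ * c := hc
          _ = (m * g) * c := by rw [hml]
          _ = g * (m * c) := by ring
      have heq2 : k.1 * n = m * c := Nat.eq_of_mul_eq_mul_left hg0 heq
      have hdvd2 : m ∣ k.1 * n := ⟨c, heq2⟩
      have cop : Nat.Coprime m n := by
        have := Nat.coprime_div_gcd_div_gcd (m := l₂) (n := l₁)
          (by rw [Nat.gcd_comm]; exact hg0)
        rw [Nat.gcd_comm l₂ l₁] at this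
        exact this
      exact cop.dvd_of_dvd_mul_right hdvd2
    · intro k hk k' hk' hkk'
      simp only [Finset.coe_filter, Set.mem_setOf_eq, mem_product, mem_Icc] at hk hk'
      simp only at hkk'
      have : k.2 * l₂ = k'.2 * l₂ := by
        rw [← hk.2, ← hk'.2, hkk']
      have h2 : k.2 = k'.2 := Nat.eq_of_mul_eq_mul_right hl₂0 this
      exact Prod.ext hkk' h2
  rw [card_mult_Icc m h] at hsub
  exact hsub




lemma one_add_log_pow_le (ε N : ℝ) (hε : 0 < ε) (hN : 2 ≤ N) :
    (1 + Real.log N)^4 ≤ (1 + 4/ε)^4 * N ^ ε := by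
  have hNp : (0:ℝ) < N := by linarith
  set δ := ε/4 with hδdef
  have hδ : 0 < δ := by positivity
  have hpow : (0:ℝ) < N ^ δ := Real.rpow_pos_of_pos hNp δ
  have hlog : Real.log N ≤ N^δ/δ := by
    have h1 : Real.log (N ^ δ) ≤ N^δ - 1 := Real.log_le_sub_one_of_pos hpow
    rw [Real.log_rpow hNp] at h1
    rw [le_div_iff₀ hδ]
    nlinarith
  have h1le : (1:ℝ) ≤ N^δ := by
    have := Real.rpow_le_rpow_of_exponent_le (by linarith : (1:ℝ) ≤ N) (le_of_lt hδ)
      (x := N) (y := 0) (z := δ)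
    rwa [Real.rpow_zero] at this
  have hlogNn : 0 ≤ Real.log N := Real.log_nonneg (by linarith)
  have hdiv : N^δ/δ = (4/ε) * N^δ := by
    rw [hδdef]; field_simp
  have key : 1 + Real.log N ≤ (1 + 4/ε) * N^δ := by
    rw [hdiv] at hlog
    have h4ε : (0:ℝ) < 4/ε := by positivity
    nlinarith
  calc (1 + Real.log N)^4 ≤ ((1 + 4/ε) * N^δ)^4 :=
        pow_le_pow_left₀ (by linarith) key 4
    _ = (1 + 4/ε)^4 * (N^δ)^(4:ℕ) := by rw [mul_pow]
    _ = (1 + 4/ε)^4 * N ^ ε := by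
        rw [← Real.rpow_natCast (N^δ) 4, ← Real.rpow_mul (le_of_lt hNp)]
        norm_num [hδdef]


end Stmt8


set_option maxHeartbeats 1000000 in
open Stmt8 in
/-- For every `ε > 0` there is `C = C(ε) > 0` such that for `N ≥ 2`, reals
`1 ≤ D, H, L ≤ N` and `L₁ ≤ 2L`:
`∑_{d₁,d₂ ≤ D} (1/[d₁,d₂]) · #{(k₁,k₂,l₁,l₂) : 0 < k₁,k₂ ≤ H, L < l₁,l₂ ≤ L₁,
k₁l₁ = k₂l₂} ≤ C N^ε H L`.
(For a natural number `k` and real `H ≥ 0`, `0 < k ≤ H ↔ k ∈ Icc 1 ⌊H⌋₊`, and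
`L < l ≤ L₁ ↔ l ∈ Ioc ⌊L⌋₊ ⌊L₁⌋₊` since `L ≥ 1`.) -/
theorem stmt_8 : ∀ ε : ℝ, 0 < ε → ∃ C > 0, ∀ N D H L L₁ : ℝ, 2 ≤ N →
    1 ≤ D → D ≤ N → 1 ≤ H → H ≤ N → 1 ≤ L → L ≤ N → L₁ ≤ 2 * L →
    ∑ d₁ ∈ Finset.Icc 1 ⌊D⌋₊, ∑ d₂ ∈ Finset.Icc 1 ⌊D⌋₊,
      (1 / (Nat.lcm d₁ d₂ : ℝ)) *
        ((((Finset.Icc 1 ⌊H⌋₊ ×ˢ Finset.Icc 1 ⌊H⌋₊) ×ˢ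
            (Finset.Ioc ⌊L⌋₊ ⌊L₁⌋₊ ×ˢ Finset.Ioc ⌊L⌋₊ ⌊L₁⌋₊)).filter
          (fun x : (ℕ × ℕ) × ℕ × ℕ => x.1.1 * x.2.1 = x.1.2 * x.2.2)).card : ℝ) ≤
    C * N ^ ε * H * L := by
  intro ε hε
  refine ⟨16 * (1 + 4/ε)^4, by positivity, ?_⟩
  intro N D H L L₁ hN hD hDN hH hHN hL hLN hL₁
  have hNpos : (0:ℝ) < N := by linarith
  have hLpos : (0:ℝ) < L := by linarith
  have hHpos : (0:ℝ) < H := by linarith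
  have hlogN : 0 ≤ Real.log N := Real.log_nonneg (by linarith)
  have hrpow : (0:ℝ) < N ^ ε := Real.rpow_pos_of_pos hNpos ε
  set a := ⌊L⌋₊ with hadef
  set b := ⌊L₁⌋₊ with hbdef
  set h := ⌊H⌋₊ with hhdef
  set mD := ⌊D⌋₊ with hmDdef
  set c : ℝ := ((((Finset.Icc 1 h ×ˢ Finset.Icc 1 h) ×ˢ
            (Finset.Ioc a b ×ˢ Finset.Ioc a b)).filter
          (fun x : (ℕ × ℕ) × ℕ × ℕ => x.1.1 * x.2.1 = x.1.2 * x.2.2)).card : ℝ) with hcdef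
  have hfact : ∑ d₁ ∈ Finset.Icc 1 mD, ∑ d₂ ∈ Finset.Icc 1 mD,
      (1 / (Nat.lcm d₁ d₂ : ℝ)) * c
      = (∑ d₁ ∈ Finset.Icc 1 mD, ∑ d₂ ∈ Finset.Icc 1 mD, (1 / (Nat.lcm d₁ d₂ : ℝ))) * c := by
    rw [Finset.sum_mul]
    exact Finset.sum_congr rfl fun d₁ _ => by rw [Finset.sum_mul]
  rw [hfact]
  by_cases hba : b ≤ a
  · have hempty : Finset.Ioc a b = (∅ : Finset ℕ) := Finset.Ioc_eq_empty (by omega)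
    have : c = 0 := by
      rw [hcdef, hempty]
      simp
    rw [this, mul_zero]
    positivity
  · push_neg at hba
    have ha1 : 1 ≤ a := Nat.le_floor (by push_cast; linarith)
    have hb1 : 1 ≤ b := by omega
    have hmD1 : 1 ≤ mD := Nat.le_floor (by push_cast; linarith)
    have hL₁0 : (0:ℝ) ≤ L₁ := by
      by_contra h'
      push_neg at h'
      have : b = 0 := by rw [hbdef]; exact Nat.floor_of_nonpos (le_of_lt h')
      omega
    have hbR : (b:ℝ) ≤ 2*L := le_trans (Nat.floor_le hL₁0) (by linarith)
    have haR : L - 1 < (a:ℝ) := Nat.sub_one_lt_floor L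
    have habR : (a:ℝ) ≤ (b:ℝ) := by exact_mod_cast le_of_lt hba
    have hbpos : (0:ℝ) < b := by exact_mod_cast hb1
    have hlogb : Real.log b ≤ 2*Real.log N := by
      have hbN2 : (b:ℝ) ≤ N^2 := by nlinarith
      calc Real.log b ≤ Real.log (N^2) := Real.log_le_log hbpos hbN2
        _ = 2*Real.log N := by rw [Real.log_pow]; push_cast; ring
    -- bound on S
    have hmDR : (0:ℝ) < mD := by exact_mod_cast hmD1
    have hlogmD : Real.log mD ≤ Real.log N :=
      Real.log_le_log hmDR (le_trans (Nat.floor_le (by linarith)) hDN)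
    have hlogmDnn : 0 ≤ Real.log mD := Real.log_nonneg (by exact_mod_cast hmD1)
    have hS : ∑ d₁ ∈ Finset.Icc 1 mD, ∑ d₂ ∈ Finset.Icc 1 mD, (1 / (Nat.lcm d₁ d₂ : ℝ))
        ≤ (1 + Real.log N)^3 := by
      refine le_trans (sum_inv_lcm mD hmD1) ?_
      have : (1:ℝ) + Real.log mD ≤ 1 + Real.log N := by linarith
      exact pow_le_pow_left₀ (by linarith) this 3
    have hSnn : (0:ℝ) ≤ ∑ d₁ ∈ Finset.Icc 1 mD, ∑ d₂ ∈ Finset.Icc 1 mD,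
        (1 / (Nat.lcm d₁ d₂ : ℝ)) :=
      Finset.sum_nonneg fun d₁ _ => Finset.sum_nonneg fun d₂ _ => by positivity
    -- bound on c
    have hc1 : c ≤ ∑ l₁ ∈ Finset.Ioc a b, ∑ l₂ ∈ Finset.Ioc a b,
        ((h / (l₂ / Nat.gcd l₁ l₂) : ℕ) : ℝ) := by
      rw [hcdef]
      exact_mod_cast count_le h a b
    have hc2 : ∑ l₁ ∈ Finset.Ioc a b, ∑ l₂ ∈ Finset.Ioc a b,
        ((h / (l₂ / Nat.gcd l₁ l₂) : ℕ) : ℝ)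
        ≤ ∑ l₁ ∈ Finset.Ioc a b, ∑ l₂ ∈ Finset.Ioc a b, (H/L) * (Nat.gcd l₁ l₂ : ℝ) := by
      refine Finset.sum_le_sum fun l₁ hl₁ => Finset.sum_le_sum fun l₂ hl₂ => ?_
      simp only [Finset.mem_Ioc] at hl₁ hl₂
      have hl₁0 : 0 < l₁ := by omega
      have hl₂0 : 0 < l₂ := by omega
      have hg0 : 0 < Nat.gcd l₁ l₂ := Nat.gcd_pos_of_pos_left _ hl₁0
      set g := Nat.gcd l₁ l₂ with hgdef
      set m := l₂ / g with hmdef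
      have hml : m * g = l₂ := Nat.div_mul_cancel (Nat.gcd_dvd_right l₁ l₂)
      have hm0 : 0 < m := by
        rcases Nat.eq_zero_or_pos m with h0 | h0
        · rw [h0] at hml; omega
        · exact h0
      have hgR : (0:ℝ) < g := by exact_mod_cast hg0
      have hmR : (m:ℝ) = (l₂:ℝ)/(g:ℝ) := by
        rw [eq_div_iff hgR.ne']
        exact_mod_cast hml
      have hl₂L : L ≤ (l₂:ℝ) := by
        have h1 : L < (a:ℝ) + 1 := Nat.lt_floor_add_one L
        have h2 : (a:ℝ) + 1 ≤ (l₂:ℝ) := by exact_mod_cast hl₂.1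
        linarith
      calc ((h / m : ℕ) : ℝ) ≤ (h:ℝ)/(m:ℝ) := nat_div_real_ub h m hm0
        _ ≤ H/(m:ℝ) := by
            have hhH : (h:ℝ) ≤ H := Nat.floor_le (by linarith)
            have hmRpos : (0:ℝ) < m := by exact_mod_cast hm0
            gcongr
        _ = H*(g:ℝ)/(l₂:ℝ) := by
            rw [hmR, div_div_eq_mul_div]
        _ ≤ H*(g:ℝ)/L := by
            gcongr
        _ = (H/L) * (g:ℝ) := by ring
    have hc3 : ∑ l₁ ∈ Finset.Ioc a b, ∑ l₂ ∈ Finset.Ioc a b, (H/L) * (Nat.gcd l₁ l₂ : ℝ)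
        = (H/L) * ∑ l₁ ∈ Finset.Ioc a b, ∑ l₂ ∈ Finset.Ioc a b, (Nat.gcd l₁ l₂ : ℝ) := by
      rw [Finset.mul_sum]
      exact Finset.sum_congr rfl fun l₁ _ => by rw [Finset.mul_sum]
    have hgcd : ∑ l₁ ∈ Finset.Ioc a b, ∑ l₂ ∈ Finset.Ioc a b, (Nat.gcd l₁ l₂ : ℝ)
        ≤ 16 * L^2 * (1 + Real.log N) := by
      refine le_trans (gcd_sum a b (le_of_lt hba) hb1) ?_
      have hΔnn : (0:ℝ) ≤ (b:ℝ) - (a:ℝ) := by linarith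
      have hΔ : (b:ℝ) - (a:ℝ) ≤ 2*L := by linarith
      have hlogbnn : 0 ≤ Real.log b := Real.log_nonneg (by exact_mod_cast hb1)
      have e1 : (1 + Real.log b) * ((b:ℝ) - (a:ℝ))^2 ≤ (1 + 2*Real.log N) * (2*L)^2 := by
        have h1 : (1:ℝ) + Real.log b ≤ 1 + 2*Real.log N := by linarith
        have h2 : ((b:ℝ)-(a:ℝ))^2 ≤ (2*L)^2 := by nlinarith
        exact mul_le_mul h1 h2 (sq_nonneg _) (by linarith)
      have e2 : 2*((b:ℝ)-(a:ℝ))*(b:ℝ) ≤ 2*(2*L)*(2*L) := by nlinarith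
      have e3 : (b:ℝ)^2 ≤ (2*L)^2 := by nlinarith
      nlinarith [sq_nonneg L]
    have hcL : c ≤ 16 * H * L * (1 + Real.log N) := by
      refine le_trans hc1 (le_trans hc2 ?_)
      rw [hc3]
      calc (H/L) * ∑ l₁ ∈ Finset.Ioc a b, ∑ l₂ ∈ Finset.Ioc a b, (Nat.gcd l₁ l₂ : ℝ)
          ≤ (H/L) * (16 * L^2 * (1 + Real.log N)) := by
            have : (0:ℝ) ≤ H/L := by positivity
            exact mul_le_mul_of_nonneg_left hgcd this
        _ = 16 * H * L * (1 + Real.log N) := by field_simp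
    have hcnn : (0:ℝ) ≤ c := by rw [hcdef]; positivity
    calc (∑ d₁ ∈ Finset.Icc 1 mD, ∑ d₂ ∈ Finset.Icc 1 mD, (1 / (Nat.lcm d₁ d₂ : ℝ))) * c
        ≤ (1 + Real.log N)^3 * (16 * H * L * (1 + Real.log N)) := by
          exact mul_le_mul hS hcL hcnn (by positivity)
      _ = 16 * (1 + Real.log N)^4 * H * L := by ring
      _ ≤ 16 * ((1 + 4/ε)^4 * N^ε) * H * L := by
          have := one_add_log_pow_le ε N hε hN
          have hHL : (0:ℝ) ≤ H * L := by positivity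
          nlinarith
      _ = 16 * (1 + 4/ε)^4 * N^ε * H * L := by ring
end

section
/- Let κ > 0 and let 1 < z < y be real numbers. Let n be a squarefree positive integer having no prime factor ≤ z, and suppose that κ · Σ_{q prime, z < q ≤ y, q | n} (1 − log q / log y) < 1. Then Ω(n) < 1/κ + log n / log y. In particular, if n ≤ N and y = N^{ρ} with ρ > 0, then Ω(n) < 1/κ + 1/ρ. -/
/-- Property of the sieve weights (cf. Halberstam–Richert, ch. 9).  Let `κ > 0` and
`1 < z < y`.  Let `n` be a squarefree positive integer with no prime factor `≤ z`, and
suppose `κ ∑_{q prime, z < q ≤ y, q ∣ n} (1 − log q / log y) < 1`.  Then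
`Ω(n) < 1/κ + log n / log y`; in particular, if `n ≤ N` and `y = N^ρ` with `ρ > 0`,
then `Ω(n) < 1/κ + 1/ρ`. -/
theorem stmt_12 (κ z y : ℝ) (hκ : 0 < κ) (hz : 1 < z) (hzy : z < y)
    (n : ℕ) (hn : 0 < n) (hsq : Squarefree n)
    (hnoz : ∀ p : ℕ, p.Prime → p ∣ n → z < (p : ℝ))
    (hsum : κ * ∑ q ∈ n.primeFactors.filter (fun q : ℕ => z < (q : ℝ) ∧ (q : ℝ) ≤ y),
        (1 - Real.log q / Real.log y) < 1) :
    ((ArithmeticFunction.cardFactors n : ℕ) : ℝ) < 1 / κ + Real.log n / Real.log y ∧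
    ∀ N ρ : ℝ, 0 < ρ → (n : ℝ) ≤ N → y = N ^ ρ →
      ((ArithmeticFunction.cardFactors n : ℕ) : ℝ) < 1 / κ + 1 / ρ := by
  have hy1 : (1 : ℝ) < y := lt_trans hz hzy
  have hlogy : 0 < Real.log y := Real.log_pos hy1
  set S := n.primeFactors with hS
  set F := S.filter (fun q : ℕ => z < (q : ℝ) ∧ (q : ℝ) ≤ y) with hF
  -- Ω(n) = card S since n squarefree
  have hcard : (ArithmeticFunction.cardFactors n : ℕ) = S.card := by
    rw [← (ArithmeticFunction.cardDistinctFactors_eq_cardFactors_iff_squarefree hn.ne').mpr hsq,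
      ArithmeticFunction.cardDistinctFactors_apply, hS, Nat.primeFactors,
      List.card_toFinset]
  -- log n = sum of logs of prime factors
  have hlogn : Real.log n = ∑ q ∈ S, Real.log q := by
    conv_lhs => rw [← Nat.prod_primeFactors_of_squarefree hsq]
    push_cast
    rw [Real.log_prod]
    intro q hq
    exact_mod_cast (Nat.prime_of_mem_primeFactors hq).pos.ne'
  -- key inequality
  have hkey : (S.card : ℝ) ≤ (∑ q ∈ F, (1 - Real.log q / Real.log y))
      + ∑ q ∈ S, Real.log q / Real.log y := by
    have hsplit : (∑ q ∈ S, Real.log q / Real.log y) =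
        (∑ q ∈ F, Real.log q / Real.log y)
        + ∑ q ∈ S.filter (fun q : ℕ => ¬(z < (q : ℝ) ∧ (q : ℝ) ≤ y)),
            Real.log q / Real.log y := by
      rw [hF, Finset.sum_filter_add_sum_filter_not]
    rw [hsplit, ← add_assoc, ← Finset.sum_add_distrib]
    simp only [sub_add_cancel]
    have hcards : (S.card : ℝ) = (F.card : ℝ)
        + ((S.filter (fun q : ℕ => ¬(z < (q : ℝ) ∧ (q : ℝ) ≤ y))).card : ℝ) := by
      rw [hF]
      push_cast [Finset.card_filter_add_card_filter_not]
      ring_nf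
      exact_mod_cast (Finset.card_filter_add_card_filter_not
        (s := S) (p := fun q : ℕ => z < (q : ℝ) ∧ (q : ℝ) ≤ y)).symm
    rw [hcards]
    gcongr with _ _ q hq
    · rw [Finset.card_eq_sum_ones, Nat.cast_sum]
      gcongr with q hq
      norm_num
    · rw [Finset.card_eq_sum_ones, Nat.cast_sum]
      gcongr with q hq
      simp only [Finset.mem_filter, not_and, not_le] at hq
      have hq' : y < (q : ℝ) := hq.2 (hnoz q (Nat.prime_of_mem_primeFactors hq.1)
        (Nat.dvd_of_mem_primeFactors hq.1))
      have : Real.log y ≤ Real.log q := Real.log_le_log (by linarith) hq'.le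
      rw [Nat.cast_one, le_div_iff₀ hlogy]
      linarith
  have hFlt : (∑ q ∈ F, (1 - Real.log q / Real.log y)) < 1 / κ := by
    rw [lt_div_iff₀ hκ]
    linarith [hsum]
  have hmain : ((ArithmeticFunction.cardFactors n : ℕ) : ℝ)
      < 1 / κ + Real.log n / Real.log y := by
    rw [hcard, hlogn, Finset.sum_div]
    calc (S.card : ℝ) ≤ _ + _ := hkey
      _ < 1 / κ + ∑ q ∈ S, Real.log q / Real.log y := by linarith
  refine ⟨hmain, fun N ρ hρ hnN hyN => ?_⟩
  have hN0 : (0 : ℝ) < N := lt_of_lt_of_le (by exact_mod_cast hn) hnN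
  have hlogyN : Real.log y = ρ * Real.log N := by rw [hyN, Real.log_rpow hN0]
  have hlogN : 0 < Real.log N := by
    by_contra h
    push_neg at h
    nlinarith
  have htail : Real.log n / Real.log y ≤ 1 / ρ := by
    rw [hlogyN]
    have hln : Real.log n ≤ Real.log N := Real.log_le_log (by exact_mod_cast hn) hnN
    rw [div_le_div_iff₀ (by positivity) hρ]
    nlinarith
  linarith
end
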